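/- In the balls-in-urns game with k urns, k balls (one per urn initially), and threshold Δ, if the player always moves the ball taken by the adversary into an untouched urn with the minimum current number of balls, then the game terminates (all untouched urns hold at least Δ balls, or no untouched urns remain) after at most k·min{log Δ, log k} + k rounds, for any adversary strategy. -/

import Mathlib

/-- Balls-in-urns game: `k` urns, one ball each initially.  At round `t`, while the game
has not ended (some urn untouched by the adversary has fewer than `Δ` balls), the
adversary picks a nonempty urn `a t`, the player picks an untouched urn `b t` of minimum
load, and a ball moves from `a t` to `b t`.  Then the game ends (all untouched urns hold
at least `Δ` balls) after at most `k·min(log Δ, log k) + k` rounds. -/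
theorem balls_in_urns_termination (k Δ : ℕ) (hk : 1 ≤ k) (hΔ : 1 ≤ Δ)
    (load : ℕ → Fin k → ℕ) (a b : ℕ → Fin k)
    (hinit : ∀ i, load 0 i = 1)
    (hrule : ∀ t, (∃ i, (∀ s < t, a s ≠ i) ∧ load t i < Δ) →
      (1 ≤ load t (a t)) ∧
      (∀ s ≤ t, a s ≠ b t) ∧
      (∀ j : Fin k, (∀ s ≤ t, a s ≠ j) → load t (b t) ≤ load t j) ∧
      (∀ i, load (t + 1) i
        = load t i - (if i = a t then 1 else 0) + (if i = b t then 1 else 0))) :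
    ∃ T : ℕ, (T : ℝ) ≤ k * min (Real.log Δ) (Real.log k) + k ∧
      ∀ i, (∀ s < T, a s ≠ i) → Δ ≤ load T i := by
  classical
  set M := min Δ k with hM
  set N := (∑ v ∈ Finset.Icc 1 (M - 1), k / v) + 1 with hN
  -- Part A : the game ends by round N
  have partA : ∃ T ≤ N, ∀ i, (∀ s < T, a s ≠ i) → Δ ≤ load T i := by
    by_contra hcon
    push_neg at hcon
    have hmove : ∀ t ≤ N, (1 ≤ load t (a t)) ∧ (∀ s ≤ t, a s ≠ b t) ∧
        (∀ j : Fin k, (∀ s ≤ t, a s ≠ j) → load t (b t) ≤ load t j) ∧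
        (∀ i, load (t + 1) i
          = load t i - (if i = a t then 1 else 0) + (if i = b t then 1 else 0)) := by
      intro t ht
      exact hrule t (hcon t ht)
    -- untouched loads are positive
    have hpos : ∀ t ≤ N, ∀ j : Fin k, (∀ s < t, a s ≠ j) → 1 ≤ load t j := by
      intro t
      induction t with
      | zero => intro _ j _; simp [hinit]
      | succ t ih =>
        intro ht j hj
        have ht' : t ≤ N := Nat.le_of_succ_le ht
        have hupd := (hmove t ht').2.2.2 j
        have hja : j ≠ a t := fun h => hj t (Nat.lt_succ_self t) h.symm
        have h1 : 1 ≤ load t j := ih ht' j (fun s hs => hj s (Nat.lt_succ_of_lt hs))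
        rw [hupd, if_neg hja]
        omega
    -- total load is k
    have htot : ∀ t ≤ N, ∑ i, load t i = k := by
      intro t
      induction t with
      | zero => intro _; simp [hinit]
      | succ t ih =>
        intro ht
        have ht' : t ≤ N := Nat.le_of_succ_le ht
        obtain ⟨h1, hab, _, hupd⟩ := hmove t ht'
        have hs1 : ∑ i, (if i = a t then 1 else 0) = 1 := by
          simp
        have hs2 : ∑ i, (if i = b t then 1 else 0) = 1 := by
          simp
        have key : ∑ i, (load t i - (if i = a t then 1 else 0)) + 1 = k := by
          have : ∑ i, ((load t i - (if i = a t then 1 else 0))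
              + (if i = a t then 1 else 0)) = ∑ i, load t i := by
            apply Finset.sum_congr rfl
            intro i _
            rcases eq_or_ne i (a t) with h | h
            · subst h; simp; omega
            · simp [h]
          rw [Finset.sum_add_distrib, hs1] at this
          rw [this, ih ht']
        calc ∑ i, load (t+1) i
            = ∑ i, ((load t i - (if i = a t then 1 else 0)) + (if i = b t then 1 else 0)) := by
              apply Finset.sum_congr rfl; intro i _; rw [hupd i]
          _ = ∑ i, (load t i - (if i = a t then 1 else 0)) + 1 := by
              rw [Finset.sum_add_distrib, hs2]
          _ = k := key
    -- value of round t
    set V : ℕ → ℕ := fun t => load t (b t) with hV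
    have hbpos : ∀ t ≤ N, 1 ≤ V t := by
      intro t ht
      exact hpos t ht (b t) (fun s hs => (hmove t ht).2.1 s (Nat.le_of_lt hs))
    have hblt_k : ∀ t ≤ N, V t + 1 ≤ k := by
      intro t ht
      show load t (b t) + 1 ≤ k
      obtain ⟨h1, hab, _, _⟩ := hmove t ht
      have hne : a t ≠ b t := hab t le_rfl
      have : load t (a t) + load t (b t) = ∑ i ∈ ({a t, b t} : Finset (Fin k)), load t i :=
        (Finset.sum_pair hne).symm
      have hle : ∑ i ∈ ({a t, b t} : Finset (Fin k)), load t i ≤ ∑ i, load t i :=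
        Finset.sum_le_sum_of_subset (Finset.subset_univ _)
      rw [htot t ht] at hle
      omega
    have hbltΔ : ∀ t, t + 1 ≤ N → V t < Δ := by
      intro t ht
      show load t (b t) < Δ
      obtain ⟨i, hi, hiΔ⟩ := hcon (t+1) ht
      have ht' : t ≤ N := Nat.le_of_succ_le ht
      obtain ⟨h1, hab, hmin, hupd⟩ := hmove t ht'
      have hiu : ∀ s ≤ t, a s ≠ i := fun s hs => hi s (Nat.lt_succ_of_le hs)
      have h2 : load t (b t) ≤ load t i := hmin i hiu
      have h3 : load t i ≤ load (t+1) i := by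
        rw [hupd i, if_neg (fun h => hiu t le_rfl h.symm)]
        split <;> omega
      omega
    -- V is monotone
    have hmono1 : ∀ t, t + 1 ≤ N → V t ≤ V (t+1) := by
      intro t ht
      show load t (b t) ≤ load (t+1) (b (t+1))
      have ht' : t ≤ N := Nat.le_of_succ_le ht
      obtain ⟨h1, hab, hmin, hupd⟩ := hmove t ht'
      have hbu : ∀ s ≤ t + 1, a s ≠ b (t+1) := (hmove (t+1) ht).2.1
      have h2 : load t (b t) ≤ load t (b (t+1)) :=
        hmin (b (t+1)) (fun s hs => hbu s (Nat.le_succ_of_le hs))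
      have h3 : load t (b (t+1)) ≤ load (t+1) (b (t+1)) := by
        rw [hupd (b (t+1)), if_neg (fun h => hbu t (Nat.le_succ t) h.symm)]
        split <;> omega
      exact le_trans h2 h3
    have hmono : ∀ t t', t ≤ t' → t' ≤ N → V t ≤ V t' := by
      have key : ∀ d t, t + d ≤ N → V t ≤ V (t + d) := by
        intro d
        induction d with
        | zero => intro t _; simp
        | succ d ih =>
          intro t ht
          have h1 : V t ≤ V (t + d) := ih t (by omega)
          have h2 : V (t + d) ≤ V (t + d + 1) := hmono1 (t + d) (by omega)
          have he : t + (d + 1) = t + d + 1 := by omega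
          rw [he]
          exact le_trans h1 h2
      intro t t' h1 h2
      have := key (t' - t) t (by omega)
      rwa [Nat.add_sub_cancel' h1] at this
    -- the set of untouched urns with load w
    set S : ℕ → ℕ → Finset (Fin k) :=
      fun w t => Finset.univ.filter (fun j => (∀ s ≤ t, a s ≠ j) ∧ load t j = w) with hS
    have hScard : ∀ w, 1 ≤ w → ∀ t ≤ N, (S w t).card ≤ k / w := by
      intro w hw t ht
      rw [Nat.le_div_iff_mul_le hw]
      calc (S w t).card * w = ∑ j ∈ S w t, load t j := by
            rw [Finset.sum_congr rfl (fun j hj => ((Finset.mem_filter.mp hj).2.2 : load t j = w))]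
            simp [mul_comm]
        _ ≤ ∑ j, load t j := Finset.sum_le_sum_of_subset (Finset.subset_univ _)
        _ = k := htot t ht
    have hstep : ∀ w t, t ≤ N → V t = w → (S w (t+1)).card + 1 ≤ (S w t).card := by
      intro w t ht hVt
      have hVt' : load t (b t) = w := hVt
      obtain ⟨h1, hab, hmin, hupd⟩ := hmove t ht
      have hbmem : b t ∈ S w t := by
        simp only [hS, Finset.mem_filter, Finset.mem_univ, true_and]
        exact ⟨hab, hVt'⟩
      have hsub : S w (t+1) ⊆ (S w t).erase (b t) := by
        intro j hj
        simp only [hS, Finset.mem_filter, Finset.mem_univ, true_and] at hj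
        obtain ⟨hju, hjl⟩ := hj
        have hja : j ≠ a t := fun h => hju t (Nat.le_succ t) h.symm
        have hjb : j ≠ b t := by
          intro h
          rw [hupd j, if_neg hja, if_pos h, h] at hjl
          omega
        rw [Finset.mem_erase]
        refine ⟨hjb, ?_⟩
        simp only [hS, Finset.mem_filter, Finset.mem_univ, true_and]
        refine ⟨fun s hs => hju s (Nat.le_succ_of_le hs), ?_⟩
        rw [hupd j, if_neg hja, if_neg hjb] at hjl
        omega
      have h2 := Finset.card_le_card hsub
      rw [Finset.card_erase_of_mem hbmem] at h2
      have h3 : 1 ≤ (S w t).card := Finset.card_pos.mpr ⟨b t, hbmem⟩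
      omega
    have hiter : ∀ d t w, t + d ≤ N → (∀ s, t ≤ s → s ≤ t + d → V s = w) →
        (S w (t + d)).card + d ≤ (S w t).card := by
      intro d
      induction d with
      | zero => intro t w _ _; simp
      | succ d ih =>
        intro t w ht hall
        have h1 : (S w (t+1+d)).card + d ≤ (S w (t+1)).card := by
          apply ih (t+1) w (by omega)
          intro s hs1 hs2
          exact hall s (by omega) (by omega)
        have h2 : (S w (t+1)).card + 1 ≤ (S w t).card :=
          hstep w t (by omega) (hall t le_rfl (by omega))
        have he : t + (d+1) = t + 1 + d := by omega
        rw [he]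
        omega
    -- fiberwise counting over range N
    have hfib : ∀ t ∈ Finset.range N, V t ∈ Finset.Icc 1 (M - 1) := by
      intro t ht
      rw [Finset.mem_range] at ht
      have h1 : 1 ≤ V t := hbpos t (Nat.le_of_lt ht)
      have h2 : V t + 1 ≤ k := hblt_k t (Nat.le_of_lt ht)
      have h3 : V t < Δ := hbltΔ t ht
      rw [Finset.mem_Icc]
      omega
    have hcount := Finset.card_eq_sum_card_fiberwise hfib
    rw [Finset.card_range] at hcount
    have hfibcard : ∀ w ∈ Finset.Icc 1 (M-1),
        ((Finset.range N).filter (fun t => V t = w)).card ≤ k / w := by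
      intro w hw
      rw [Finset.mem_Icc] at hw
      set F := (Finset.range N).filter (fun t => V t = w) with hF
      rcases Finset.eq_empty_or_nonempty F with he | hne
      · rw [he]; simp
      · set t0 := F.min' hne with ht0
        set t1 := F.max' hne with ht1
        have ht0m := F.min'_mem hne
        have ht1m := F.max'_mem hne
        have ht0w : V t0 = w := (Finset.mem_filter.mp ht0m).2
        have ht1w : V t1 = w := (Finset.mem_filter.mp ht1m).2
        have ht1N : t1 ≤ N := Nat.le_of_lt (Finset.mem_range.mp (Finset.mem_filter.mp ht1m).1)
        have ht01 : t0 ≤ t1 := F.min'_le t1 ht1m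
        have hallw : ∀ s, t0 ≤ s → s ≤ t1 → V s = w := by
          intro s hs1 hs2
          have ha1 : V t0 ≤ V s := hmono t0 s hs1 (le_trans hs2 ht1N)
          have ha2 : V s ≤ V t1 := hmono s t1 hs2 ht1N
          omega
        have hit : (S w t1).card + (t1 - t0) ≤ (S w t0).card := by
          have := hiter (t1 - t0) t0 w (by omega) (by intro s h1 h2; exact hallw s h1 (by omega))
          rwa [Nat.add_sub_cancel' ht01] at this
        have hSb : 1 ≤ (S w t1).card := by
          apply Finset.card_pos.mpr
          refine ⟨b t1, ?_⟩
          simp only [hS, Finset.mem_filter, Finset.mem_univ, true_and]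
          exact ⟨(hmove t1 ht1N).2.1, ht1w⟩
        have hS0 : (S w t0).card ≤ k / w := hScard w hw.1 t0 (le_trans ht01 ht1N)
        have hFsub : F ⊆ Finset.Icc t0 t1 := by
          intro s hs
          rw [Finset.mem_Icc]
          exact ⟨F.min'_le s hs, F.le_max' s hs⟩
        have := Finset.card_le_card hFsub
        rw [Nat.card_Icc] at this
        omega
    have : N ≤ ∑ w ∈ Finset.Icc 1 (M-1), k / w :=
      hcount.trans_le (Finset.sum_le_sum hfibcard)
    omega
  -- Part B : the numeric bound
  obtain ⟨T, hT, hTend⟩ := partA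
  refine ⟨T, ?_, hTend⟩
  have hTN : (T : ℝ) ≤ N := Nat.cast_le.mpr hT
  refine le_trans hTN ?_
  have hM1 : 1 ≤ M := le_min hΔ hk
  have hMk : M ≤ k := min_le_right _ _
  have hk0 : (0:ℝ) < k := by exact_mod_cast hk
  have hΔ0 : (0:ℝ) < Δ := by exact_mod_cast hΔ
  have hlog : min (Real.log Δ) (Real.log k) = Real.log M := by
    rcases le_total Δ k with h | h
    · rw [hM, min_eq_left h, min_eq_left
        (Real.log_le_log hΔ0 (by exact_mod_cast h))]
    · rw [hM, min_eq_right h, min_eq_right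
        (Real.log_le_log hk0 (by exact_mod_cast h))]
  rw [hlog, hN]
  rcases eq_or_lt_of_le hM1 with h1 | h2
  · -- M = 1
    rw [← h1]
    rw [Finset.Icc_eq_empty (by omega : ¬(1:ℕ) ≤ 1 - 1)]
    push_cast
    simp only [Finset.sum_empty, Real.log_one, mul_zero, zero_add]
    have hk1 : (1:ℝ) ≤ (k:ℝ) := by exact_mod_cast hk
    linarith
  · -- 2 ≤ M
    have hM2 : 2 ≤ M := h2
    have hMR : (2:ℝ) ≤ M := by exact_mod_cast hM2
    -- cast the sum
    have hsum1 : ((∑ v ∈ Finset.Icc 1 (M-1), k / v : ℕ) : ℝ)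
        ≤ ∑ v ∈ Finset.Icc 1 (M-1), (k:ℝ)/v := by
      push_cast
      exact Finset.sum_le_sum (fun v _ => Nat.cast_div_le)
    have hIcc : Finset.Icc 1 (M-1) = Finset.Ico 1 M := by
      rw [← Finset.Ico_add_one_right_eq_Icc]
      congr 1
      omega
    have hsum2 : ∑ v ∈ Finset.Icc 1 (M-1), (k:ℝ)/v
        = (∑ i ∈ Finset.range (M-2), (k:ℝ)/(i+2)) + k := by
      rw [hIcc, Finset.sum_Ico_eq_sum_range]
      have hM1' : M - 1 = (M - 2) + 1 := by omega
      rw [hM1', Finset.sum_range_succ']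
      congr 1
      · apply Finset.sum_congr rfl
        intro i _
        congr 1
        push_cast; ring
      · norm_num
    have hsum3 : ∑ i ∈ Finset.range (M-2), (k:ℝ)/(i+2)
        ≤ ∑ i ∈ Finset.range (M-2), (k:ℝ) * (Real.log (i+2) - Real.log (i+1)) := by
      apply Finset.sum_le_sum
      intro i _
      have hx : (0:ℝ) < ((i:ℝ)+1)/((i:ℝ)+2) := by positivity
      have h := Real.log_le_sub_one_of_pos hx
      rw [Real.log_div (by positivity) (by positivity)] at h
      have h2' : ((i:ℝ)+1)/((i:ℝ)+2) - 1 = -(1/((i:ℝ)+2)) := by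
        field_simp
        norm_num
      rw [h2'] at h
      have h3 : 1/((i:ℝ)+2) ≤ Real.log (i+2) - Real.log (i+1) := by linarith
      calc (k:ℝ)/(i+2) = k * (1/((i:ℝ)+2)) := by ring
        _ ≤ k * (Real.log (i+2) - Real.log (i+1)) := by
            exact mul_le_mul_of_nonneg_left h3 (le_of_lt hk0)
    have hsum4 : ∑ i ∈ Finset.range (M-2), (k:ℝ) * (Real.log (i+2) - Real.log (i+1))
        = k * Real.log ((M:ℝ) - 1) := by
      rw [← Finset.mul_sum]
      congr 1
      calc ∑ i ∈ Finset.range (M-2), (Real.log ((i:ℝ)+2) - Real.log ((i:ℝ)+1))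
          = ∑ i ∈ Finset.range (M-2),
            (Real.log ((((i+1:ℕ)):ℝ)+1) - Real.log ((i:ℝ)+1)) := by
            apply Finset.sum_congr rfl
            intro i _
            congr 2
            push_cast; ring
        _ = Real.log (((M-2:ℕ):ℝ)+1) - Real.log (((0:ℕ):ℝ)+1) :=
            Finset.sum_range_sub (fun i => Real.log ((i:ℝ)+1)) (M-2)
        _ = Real.log ((M:ℝ)-1) := by
            rw [Nat.cast_sub hM2]
            norm_num
            congr 1
            ring
    -- final chain
    have hlast : (k:ℝ) * Real.log ((M:ℝ)-1) + 1 ≤ k * Real.log M := by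
      have hx : (0:ℝ) < ((M:ℝ)-1)/M := by
        apply div_pos <;> linarith
      have h := Real.log_le_sub_one_of_pos hx
      rw [Real.log_div (by linarith) (by linarith)] at h
      have h2' : ((M:ℝ)-1)/M - 1 = -(1/(M:ℝ)) := by
        field_simp
        ring
      rw [h2'] at h
      -- h : log(M-1) - log M ≤ -(1/M)
      have h3 : (1:ℝ) ≤ (k:ℝ) * (1/M) := by
        rw [mul_one_div]
        rw [le_div_iff₀ (by linarith)]
        have : (M:ℝ) ≤ k := by exact_mod_cast hMk
        linarith
      nlinarith [hk0]
    rw [Nat.cast_add, Nat.cast_one]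
    calc ((∑ v ∈ Finset.Icc 1 (M-1), k / v : ℕ) : ℝ) + 1
        ≤ (∑ v ∈ Finset.Icc 1 (M-1), (k:ℝ)/v) + 1 := by linarith
      _ = (∑ i ∈ Finset.range (M-2), (k:ℝ)/(i+2)) + k + 1 := by rw [hsum2]
      _ ≤ k * Real.log ((M:ℝ)-1) + k + 1 := by
          have := hsum3.trans (le_of_eq hsum4)
          linarith
      _ ≤ k * Real.log M + k := by linarith
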